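/- Let Φ(ξ,η) = √(|ξ|²+1) − √(2|ξ−η|²+4) + √(|η|²+1). Its gradient in η is ∇_ηΦ(ξ,η) = 2(ξ−η)/√(2|ξ−η|²+4) + η/√(|η|²+1), and there exists a constant C > 0 such that for all ξ, η ∈ ℝ² with |ξ| ≤ 1 and |η| ≤ 1 one has |∇_ηΦ(ξ,η) − ξ| ≤ C·(|ξ|³ + |η|³). -/

import Mathlib

open InnerProductSpace

noncomputable def Phi (ξ η : EuclideanSpace ℝ (Fin 2)) : ℝ :=
  Real.sqrt (‖ξ‖ ^ 2 + 1) - Real.sqrt (2 * ‖ξ - η‖ ^ 2 + 4) + Real.sqrt (‖η‖ ^ 2 + 1)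

noncomputable def gradPhi (ξ η : EuclideanSpace ℝ (Fin 2)) : EuclideanSpace ℝ (Fin 2) :=
  (2 / Real.sqrt (2 * ‖ξ - η‖ ^ 2 + 4)) • (ξ - η) + (1 / Real.sqrt (‖η‖ ^ 2 + 1)) • η

lemma gradKey {E : Type*} [NormedAddCommGroup E] [InnerProductSpace ℝ E] [CompleteSpace E]
    (a : E) (c d : ℝ) (x : E) (hcd : 0 < c * ‖x - a‖ ^ 2 + d) :
    HasGradientAt (fun y => Real.sqrt (c * ‖y - a‖ ^ 2 + d))
      ((c / Real.sqrt (c * ‖x - a‖ ^ 2 + d)) • (x - a)) x := by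
  have hinner : HasFDerivAt (fun y : E => (inner ℝ (y - a) (y - a) : ℝ))
      ((fderivInnerCLM ℝ (x - a, x - a)).comp
        (((ContinuousLinearMap.id ℝ E).prod (ContinuousLinearMap.id ℝ E)))) x :=
    ((hasFDerivAt_id x).sub_const a).inner ℝ ((hasFDerivAt_id x).sub_const a)
  have heq : (fun y : E => c * (inner ℝ (y - a) (y - a) : ℝ) + d)
      = fun y : E => c * ‖y - a‖ ^ 2 + d := by
    funext y; rw [real_inner_self_eq_norm_sq]
  have hg : HasFDerivAt (fun y : E => c * ‖y - a‖ ^ 2 + d)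
      (c • ((fderivInnerCLM ℝ (x - a, x - a)).comp
        (((ContinuousLinearMap.id ℝ E).prod (ContinuousLinearMap.id ℝ E))))) x :=
    heq ▸ ((hinner.const_mul c).add_const d)
  have hne : c * ‖x - a‖ ^ 2 + d ≠ 0 := ne_of_gt hcd
  have hspos : 0 < Real.sqrt (c * ‖x - a‖ ^ 2 + d) := Real.sqrt_pos.2 hcd
  have hsqrt := hg.sqrt hne
  rw [hasGradientAt_iff_hasFDerivAt]
  refine hsqrt.congr_fderiv ?_
  ext v
  simp only [toDual_apply_apply, ContinuousLinearMap.smul_apply, ContinuousLinearMap.comp_apply,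
    ContinuousLinearMap.prod_apply, ContinuousLinearMap.id_apply, fderivInnerCLM_apply,
    real_inner_smul_left, smul_eq_mul, real_inner_smul_right]
  rw [real_inner_comm (x - a) v]
  field_simp
  ring

lemma estA (t : ℝ) : 1 - 2 / Real.sqrt (2 * t ^ 2 + 4) ≤ t ^ 2 / 4 := by
  set s := Real.sqrt (2 * t ^ 2 + 4) with hs
  have hsq : s ^ 2 = 2 * t ^ 2 + 4 := Real.sq_sqrt (by positivity)
  have hspos : 0 < s := Real.sqrt_pos.2 (by positivity)
  have h2 : 2 ≤ s := by nlinarith [sq_nonneg (s - 2)]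
  have : 1 - t ^ 2 / 4 ≤ 2 / s := by
    rw [le_div_iff₀ hspos]
    nlinarith [mul_nonneg (sq_nonneg (s - 2)) (by linarith : (0:ℝ) ≤ s + 4)]
  linarith

lemma estB (r : ℝ) : 1 - 1 / Real.sqrt (r ^ 2 + 1) ≤ r ^ 2 / 2 := by
  set s := Real.sqrt (r ^ 2 + 1) with hs
  have hsq : s ^ 2 = r ^ 2 + 1 := Real.sq_sqrt (by positivity)
  have hspos : 0 < s := Real.sqrt_pos.2 (by positivity)
  have h1 : 1 ≤ s := by nlinarith [sq_nonneg (s - 1)]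
  have : 1 - r ^ 2 / 2 ≤ 1 / s := by
    rw [le_div_iff₀ hspos]
    nlinarith [mul_nonneg (sq_nonneg (s - 1)) (by linarith : (0:ℝ) ≤ s + 2)]
  linarith

lemma c1_le_one (t : ℝ) : 2 / Real.sqrt (2 * t ^ 2 + 4) ≤ 1 := by
  have h2 : 2 ≤ Real.sqrt (2 * t ^ 2 + 4) := by
    have hsq : (Real.sqrt (2 * t ^ 2 + 4)) ^ 2 = 2 * t ^ 2 + 4 := Real.sq_sqrt (by positivity)
    nlinarith [Real.sqrt_nonneg (2 * t ^ 2 + 4), sq_nonneg (Real.sqrt (2 * t ^ 2 + 4) - 2)]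
  rw [div_le_one (by linarith)]; exact h2

lemma c2_le_one (r : ℝ) : 1 / Real.sqrt (r ^ 2 + 1) ≤ 1 := by
  have h1 : 1 ≤ Real.sqrt (r ^ 2 + 1) := by
    have hsq : (Real.sqrt (r ^ 2 + 1)) ^ 2 = r ^ 2 + 1 := Real.sq_sqrt (by positivity)
    nlinarith [Real.sqrt_nonneg (r ^ 2 + 1), sq_nonneg (Real.sqrt (r ^ 2 + 1) - 1)]
  rw [div_le_one (by linarith)]; exact h1

theorem gradient_formula_and_expansion :
    (∀ ξ η : EuclideanSpace ℝ (Fin 2), HasGradientAt (fun η' => Phi ξ η') (gradPhi ξ η) η) ∧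
    ∃ C : ℝ, 0 < C ∧ ∀ ξ η : EuclideanSpace ℝ (Fin 2), ‖ξ‖ ≤ 1 → ‖η‖ ≤ 1 →
      ‖gradPhi ξ η - ξ‖ ≤ C * (‖ξ‖ ^ 3 + ‖η‖ ^ 3) := by
  constructor
  · intro ξ η
    have h1 := gradKey ξ 2 4 η (by positivity)
    have h2 := gradKey (0 : EuclideanSpace ℝ (Fin 2)) 1 1 η (by positivity)
    rw [hasGradientAt_iff_hasFDerivAt] at h1 h2 ⊢
    have hfd := ((h1.const_sub (Real.sqrt (‖ξ‖ ^ 2 + 1))).add h2)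
    have hfun : (fun η' : EuclideanSpace ℝ (Fin 2) =>
        Real.sqrt (‖ξ‖ ^ 2 + 1) - Real.sqrt (2 * ‖η' - ξ‖ ^ 2 + 4)
          + Real.sqrt (1 * ‖η' - 0‖ ^ 2 + 1)) = fun η' => Phi ξ η' := by
      funext η'
      simp [Phi, norm_sub_rev η' ξ, one_mul]
    simp only [Pi.add_def] at hfd
    rw [hfun] at hfd
    refine hfd.congr_fderiv ?_
    rw [← map_neg, ← map_add]
    congr 1
    simp only [gradPhi, sub_zero, one_mul, norm_sub_rev ξ η, smul_sub]
    module
  · refine ⟨2, by norm_num, fun ξ η hξ hη => ?_⟩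
    set t := ‖ξ - η‖ with ht
    set r := ‖η‖ with hr
    set c1 := 2 / Real.sqrt (2 * t ^ 2 + 4) with hc1
    set c2 := 1 / Real.sqrt (r ^ 2 + 1) with hc2
    have hdecomp : gradPhi ξ η - ξ = (c1 - 1) • (ξ - η) + (c2 - 1) • η := by
      simp only [gradPhi, ← hc1, ← hc2]
      module
    have hc1pos : 0 ≤ c1 := by positivity
    have hc2pos : 0 ≤ c2 := by positivity
    have hnorm : ‖gradPhi ξ η - ξ‖ ≤ (1 - c1) * t + (1 - c2) * r := by
      rw [hdecomp]
      refine (norm_add_le _ _).trans ?_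
      rw [norm_smul, norm_smul]
      gcongr <;> rw [Real.norm_eq_abs, abs_sub_comm, abs_of_nonneg (by linarith [c1_le_one t, c2_le_one r])]
    have hA : 1 - c1 ≤ t ^ 2 / 4 := estA t
    have hB : 1 - c2 ≤ r ^ 2 / 2 := estB r
    have htn : 0 ≤ t := norm_nonneg _
    have hrn : 0 ≤ r := norm_nonneg _
    have htb : t ≤ ‖ξ‖ + r := norm_sub_le ξ η
    have hξn : 0 ≤ ‖ξ‖ := norm_nonneg _
    calc ‖gradPhi ξ η - ξ‖ ≤ (1 - c1) * t + (1 - c2) * r := hnorm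
      _ ≤ (t ^ 2 / 4) * t + (r ^ 2 / 2) * r := by
          gcongr <;> first | exact hA | exact hB |
            linarith [c1_le_one t, c2_le_one r]
      _ ≤ 2 * (‖ξ‖ ^ 3 + ‖η‖ ^ 3) := by
          rw [← hr]
          have h3 : t ^ 3 ≤ 4 * (‖ξ‖ ^ 3 + r ^ 3) := by
            have := pow_le_pow_left₀ htn htb 3
            nlinarith [mul_nonneg (sq_nonneg (‖ξ‖ - r)) (by linarith : (0:ℝ) ≤ ‖ξ‖ + r)]
          have h4 : 0 ≤ ‖ξ‖ ^ 3 := by positivity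
          have h5 : 0 ≤ r ^ 3 := by positivity
          nlinarith
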